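/- Let R be a commutative G-graded ring such that the clique number of Gr_G(R) is finite and greater than 1. Then R has only finitely many graded maximal ideals. -/

import Mathlib

variable {G R : Type*} [AddGroup G] [DecidableEq G] [CommRing R]

/-- The set of proper nontrivial `G`-graded ideals of `R`. -/
def hV (𝒜 : G → AddSubgroup R) [GradedRing 𝒜] : Set (Ideal R) :=
  {I | I ≠ ⊥ ∧ I ≠ ⊤ ∧ Ideal.IsHomogeneous 𝒜 I}

/-- The intersection graph on a set of ideals: two distinct ideals are
adjacent iff their intersection is nonzero. -/
def interGraph (V : Set (Ideal R)) : SimpleGraph V where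
  Adj I J := I ≠ J ∧ (I : Ideal R) ⊓ (J : Ideal R) ≠ ⊥
  symm := ⟨fun I J ⟨h1, h2⟩ => ⟨h1.symm, by rwa [inf_comm] at h2⟩⟩
  loopless := ⟨fun I ⟨h1, _⟩ => h1 rfl⟩
/-- The clique number of a simple graph, as an extended natural number. -/
noncomputable def cliqueNumE {V : Type*} (Γ : SimpleGraph V) : ℕ∞ :=
  ⨆ s : {s : Finset V // Γ.IsClique (s : Set V)}, ((s : Finset V).card : ℕ∞)

/-- If the clique number of the intersection graph of graded ideals of
a commutative `G`-graded ring is finite and greater than 1, then `R` has only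
finitely many graded maximal ideals. -/
theorem stmt8 (𝒜 : G → AddSubgroup R) [GradedRing 𝒜]
    (h1 : 1 < cliqueNumE (interGraph (hV 𝒜)))
    (h2 : cliqueNumE (interGraph (hV 𝒜)) < ⊤) :
    {M : Ideal R | M ≠ ⊤ ∧ Ideal.IsHomogeneous 𝒜 M ∧
      ∀ J : Ideal R, Ideal.IsHomogeneous 𝒜 J → M < J → J = ⊤}.Finite := by
  set S : Set (Ideal R) := {M : Ideal R | M ≠ ⊤ ∧ Ideal.IsHomogeneous 𝒜 M ∧
      ∀ J : Ideal R, Ideal.IsHomogeneous 𝒜 J → M < J → J = ⊤} with hSdef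
  -- get an element of hV 𝒜 from h1
  rw [cliqueNumE, lt_iSup_iff] at h1
  obtain ⟨⟨s, hsclique⟩, hcard⟩ := h1
  have hs2 : 1 ≤ s.card := by
    by_contra h
    push_neg at h
    rw [Nat.lt_one_iff.mp h] at hcard
    simp at hcard
  obtain ⟨I, hIs⟩ := Finset.card_pos.mp hs2
  have hIV : (I : Ideal R) ∈ hV 𝒜 := I.2
  obtain ⟨hIbot, hItop, hIhom⟩ := hIV
  -- ⊥ is not in S
  have hbot : ∀ M ∈ S, M ≠ ⊥ := by
    intro M hM hMbot
    have := hM.2.2 I hIhom (by rw [hMbot]; exact bot_lt_iff_ne_bot.mpr hIbot)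
    exact hItop this
  -- any two distinct members of S are comaximal
  have hsup : ∀ M ∈ S, ∀ P ∈ S, P ≠ M → M ⊔ P = ⊤ := by
    intro M hM P hP hne
    refine hM.2.2 (M ⊔ P) (hM.2.1.sup hP.2.1) ?_
    rw [left_lt_sup]
    intro hle
    rcases hle.lt_or_eq with hlt | heq
    · exact hM.1 (hP.2.2 M hM.2.1 hlt)
    · exact hne heq
  by_cases hA : ∃ M ∈ S, ∃ N ∈ S, M ≠ N ∧ M ⊓ N = ⊥
  · -- two comaximal with zero intersection: S ⊆ {M, N}
    obtain ⟨M, hM, N, hN, hMN, hMNbot⟩ := hA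
    refine Set.Finite.subset ((Set.finite_singleton N).insert M) ?_
    intro P hP
    by_contra hPnot
    simp only [Set.mem_insert_iff, Set.mem_singleton_iff] at hPnot
    push_neg at hPnot
    obtain ⟨hPM, hPN⟩ := hPnot
    have c1 : IsCoprime P M := (Ideal.isCoprime_iff_sup_eq).mpr (hsup P hP M hM hPM.symm)
    have c2 : IsCoprime P N := (Ideal.isCoprime_iff_sup_eq).mpr (hsup P hP N hN hPN.symm)
    have c3 : IsCoprime P (M * N) := c1.mul_right c2
    have hMN0 : M * N = ⊥ := le_bot_iff.mp (Ideal.mul_le_inf.trans hMNbot.le)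
    rw [hMN0, ← Ideal.zero_eq_bot] at c3
    have := isCoprime_zero_right.mp c3
    exact hP.1 (Ideal.isUnit_iff.mp this)
  · -- all pairs intersect: S gives cliques of arbitrary size
    push_neg at hA
    by_contra hfin
    have hSinf : S.Infinite := hfin
    -- S as a subset of hV
    have hSsub : S ⊆ hV 𝒜 := fun M hM => ⟨hbot M hM, hM.1, hM.2.1⟩
    set S' : Set (hV 𝒜) := {x | (x : Ideal R) ∈ S} with hS'def
    have hS'inf : S'.Infinite := by
      intro hS'fin
      apply hSinf
      have : S = Subtype.val '' S' := by
        ext x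
        constructor
        · intro hx; exact ⟨⟨x, hSsub hx⟩, hx, rfl⟩
        · rintro ⟨⟨y, hy⟩, hyS, rfl⟩; exact hyS
      rw [this]
      exact hS'fin.image _
    obtain ⟨m, hm⟩ := WithTop.ne_top_iff_exists.mp h2.ne
    obtain ⟨t, htS, htc⟩ := hS'inf.exists_subset_card_eq (m + 1)
    have hclique : (interGraph (hV 𝒜)).IsClique (t : Set (hV 𝒜)) := by
      intro a ha b hb hab
      refine ⟨hab, hA a (htS ha) b (htS hb) (fun h => hab (Subtype.ext h))⟩
    have hle : ((m + 1 : ℕ) : ℕ∞) ≤ cliqueNumE (interGraph (hV 𝒜)) := by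
      have := le_iSup (fun s : {s : Finset (hV 𝒜) // (interGraph (hV 𝒜)).IsClique (s : Set (hV 𝒜))} => ((s : Finset (hV 𝒜)).card : ℕ∞)) ⟨t, hclique⟩
      simpa [htc, cliqueNumE] using this
    rw [← hm] at hle
    exact absurd (Nat.cast_le.mp hle) (by omega)
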